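/- The function F⁻(z,w) = F⁺(1/z,w) satisfies the monodromy relation 𝓛_z F⁻ = w⁻¹·F⁻: for every ξ ∈ ℂ and every w ∈ ℂ∖{0}, G(−(ξ + 2πi), w) = w⁻¹ · G(−ξ, w). -/

import Mathlib

open Complex

private lemma steinAux_hasProd_zero {f : ℕ → ℂ} (b : ℕ) (h : f b = 0) : HasProd f 0 := by
  have hev : ∀ᶠ s : Finset ℕ in Filter.atTop, ∏ i ∈ s, f i = 0 := by
    filter_upwards [Filter.eventually_ge_atTop ({b} : Finset ℕ)] with s hs
    exact Finset.prod_eq_zero (hs (Finset.mem_singleton_self b)) h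
  exact Filter.Tendsto.congr' (hev.mono fun s hs ↦ hs.symm) tendsto_const_nhds

private lemma steinAux_multipliable (c : ℂ) {q : ℂ} (hq : ‖q‖ < 1) :
    Multipliable fun n : ℕ ↦ 1 + c * q ^ n := by
  by_cases hz : ∀ n : ℕ, 1 + c * q ^ n ≠ 0
  · have hsum : Summable fun n : ℕ ↦ ‖c * q ^ n‖ := by
      simpa [norm_mul, norm_pow] using
        (summable_geometric_of_lt_one (norm_nonneg q) hq).mul_left ‖c‖
    have h0 : Filter.Tendsto (fun n : ℕ ↦ ‖c * q ^ n‖) Filter.atTop (nhds 0) :=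
      hsum.tendsto_atTop_zero
    have hlog : Summable fun n : ℕ ↦ Complex.log (1 + c * q ^ n) := by
      apply Summable.of_norm_bounded_eventually_nat (g := fun n ↦ 3 / 2 * ‖c * q ^ n‖)
        (hsum.mul_left _)
      filter_upwards [h0.eventually_le_const (by norm_num : (0 : ℝ) < 1 / 2)] with n hn
      exact Complex.norm_log_one_add_half_le_self hn
    exact ⟨_, hlog.hasSum.cexp.congr fun s ↦
      Finset.prod_congr rfl fun x _ ↦ by
        simp only [Function.comp_apply, Complex.exp_log (hz x)]⟩
  · push_neg at hz
    obtain ⟨b, hb⟩ := hz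
    exact ⟨0, steinAux_hasProd_zero b hb⟩

/-- Stein's function `F⁺(z,w)` written in the variable `ξ = log z`. -/
noncomputable def steinG (ξ w : ℂ) : ℂ :=
  Complex.exp (ξ ^ 2 / (4 * Real.pi) + ξ / (1 - Complex.I)) *
    (∏' ν : ℕ, (1 - w * Complex.exp (-Complex.I * ξ - 2 * Real.pi * ν))) *
    (∏' μ : ℕ, (1 - w⁻¹ * Complex.exp (Complex.I * ξ - 2 * Real.pi * (μ + 1))))

/-- Monodromy relation `𝓛_z F⁻ = w⁻¹·F⁻` for `F⁻(z,w) = F⁺(1/z,w)`: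
in the variable `ξ = log z`, `G(−(ξ + 2πi), w) = w⁻¹ · G(−ξ, w)`. -/
theorem steinG_neg_monodromy (ξ w : ℂ) (hw : w ≠ 0) :
    steinG (-(ξ + 2 * Real.pi * Complex.I)) w = w⁻¹ * steinG (-ξ) w := by
  have hπ : (Real.pi : ℂ) ≠ 0 := by
    exact_mod_cast Real.pi_ne_zero
  set π : ℂ := (Real.pi : ℂ) with hπdef
  set fP : ℕ → ℂ := fun ν ↦ 1 - w * Complex.exp (Complex.I * ξ - 2 * π * ν) with hfP
  set fQ : ℕ → ℂ := fun μ ↦ 1 - w⁻¹ * Complex.exp (-Complex.I * ξ - 2 * π * μ) with hfQ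
  have hqnorm : ‖Complex.exp (-(2 * π))‖ < 1 := by
    rw [Complex.norm_exp]
    have hre : (-(2 * π)).re = -(2 * Real.pi) := by simp [hπdef]
    rw [hre]
    exact Real.exp_lt_one_iff.mpr (by linarith [Real.pi_pos])
  -- multipliability of the shifted products
  have hPmul : Multipliable fun ν : ℕ ↦ fP (ν + 1) := by
    have hfeq : (fun ν : ℕ ↦ fP (ν + 1))
        = fun ν : ℕ ↦ 1 + (-(w * Complex.exp (Complex.I * ξ - 2 * π))) *
            (Complex.exp (-(2 * π))) ^ ν := by
      funext n
      have h : Complex.I * ξ - 2 * π * ((n : ℂ) + 1)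
          = (Complex.I * ξ - 2 * π) + (n : ℂ) * (-(2 * π)) := by ring
      simp only [hfP]
      push_cast
      rw [h, Complex.exp_add, Complex.exp_nat_mul]
      ring
    rw [hfeq]
    exact steinAux_multipliable _ hqnorm
  have hQmul : Multipliable fun μ : ℕ ↦ fQ (μ + 1) := by
    have hfeq : (fun μ : ℕ ↦ fQ (μ + 1))
        = fun μ : ℕ ↦ 1 + (-(w⁻¹ * Complex.exp (-Complex.I * ξ - 2 * π))) *
            (Complex.exp (-(2 * π))) ^ μ := by
      funext n
      have h : -Complex.I * ξ - 2 * π * ((n : ℂ) + 1)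
          = (-Complex.I * ξ - 2 * π) + (n : ℂ) * (-(2 * π)) := by ring
      simp only [hfQ]
      push_cast
      rw [h, Complex.exp_add, Complex.exp_nat_mul]
      ring
    rw [hfeq]
    exact steinAux_multipliable _ hqnorm
  -- rewrite the four infinite products
  have e1 : (∏' ν : ℕ, (1 - w * Complex.exp (-Complex.I * (-(ξ + 2 * π * Complex.I)) - 2 * π * ν)))
      = ∏' ν : ℕ, fP (ν + 1) := by
    refine tprod_congr fun ν ↦ ?_
    have h : -Complex.I * (-(ξ + 2 * π * Complex.I)) - 2 * π * (ν : ℂ)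
        = Complex.I * ξ - 2 * π * (((ν : ℕ) + 1 : ℕ) : ℂ) := by
      push_cast
      linear_combination (2 * π) * Complex.I_sq
    simp only [hfP, h]
  have e2 : (∏' μ : ℕ, (1 - w⁻¹ * Complex.exp (Complex.I * (-(ξ + 2 * π * Complex.I)) - 2 * π * ((μ : ℂ) + 1))))
      = ∏' μ : ℕ, fQ μ := by
    refine tprod_congr fun μ ↦ ?_
    have h : Complex.I * (-(ξ + 2 * π * Complex.I)) - 2 * π * ((μ : ℂ) + 1)
        = -Complex.I * ξ - 2 * π * (μ : ℂ) := by
      linear_combination (-(2 * π)) * Complex.I_sq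
    simp only [hfQ, h]
  have e3 : (∏' ν : ℕ, (1 - w * Complex.exp (-Complex.I * (-ξ) - 2 * π * ν)))
      = ∏' ν : ℕ, fP ν := by
    refine tprod_congr fun ν ↦ ?_
    have h : -Complex.I * (-ξ) - 2 * π * (ν : ℂ) = Complex.I * ξ - 2 * π * (ν : ℂ) := by ring
    simp only [hfP, h]
  have e4 : (∏' μ : ℕ, (1 - w⁻¹ * Complex.exp (Complex.I * (-ξ) - 2 * π * ((μ : ℂ) + 1))))
      = ∏' μ : ℕ, fQ (μ + 1) := by
    refine tprod_congr fun μ ↦ ?_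
    have h : Complex.I * (-ξ) - 2 * π * ((μ : ℂ) + 1)
        = -Complex.I * ξ - 2 * π * (((μ : ℕ) + 1 : ℕ) : ℂ) := by
      push_cast
      ring
    simp only [hfQ, h]
  -- the exponential prefactor
  have hA : (-(ξ + 2 * π * Complex.I)) ^ 2 / (4 * π) + (-(ξ + 2 * π * Complex.I)) / (1 - Complex.I)
      = ((-ξ) ^ 2 / (4 * π) + (-ξ) / (1 - Complex.I)) + (Complex.I * ξ - π * Complex.I) := by
    have h4π : (4 : ℂ) * π ≠ 0 := by
      simp [hπ]
    have hI : (1 : ℂ) - Complex.I ≠ 0 := fun h ↦ by simpa using congrArg Complex.im h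
    have h1 : (-(ξ + 2 * π * Complex.I)) ^ 2 = (-ξ) ^ 2 + (Complex.I * ξ - π) * (4 * π) := by
      linear_combination (4 * π ^ 2) * Complex.I_sq
    have h2 : -(ξ + 2 * π * Complex.I) = -ξ + (π - π * Complex.I) * (1 - Complex.I) := by
      linear_combination (-π) * Complex.I_sq
    rw [h1, h2, add_div, add_div, mul_div_cancel_right₀ _ h4π, mul_div_cancel_right₀ _ hI]
    ring
  have hexp : Complex.exp ((-(ξ + 2 * π * Complex.I)) ^ 2 / (4 * π)
        + (-(ξ + 2 * π * Complex.I)) / (1 - Complex.I))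
      = Complex.exp ((-ξ) ^ 2 / (4 * π) + (-ξ) / (1 - Complex.I)) * (-Complex.exp (Complex.I * ξ)) := by
    rw [hA, Complex.exp_add]
    congr 1
    have h : Complex.I * ξ - π * Complex.I = Complex.I * ξ + -(π * Complex.I) := by ring
    rw [h, Complex.exp_add, Complex.exp_neg, Complex.exp_pi_mul_I]
    field_simp
  -- put everything together
  unfold steinG
  rw [← hπdef]
  rw [e1, e2, e3, e4, hexp, tprod_eq_zero_mul' hPmul, tprod_eq_zero_mul' hQmul]
  have hP0 : fP 0 = 1 - w * Complex.exp (Complex.I * ξ) := by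
    simp [hfP]
  have hQ0 : fQ 0 = 1 - w⁻¹ * Complex.exp (-(Complex.I * ξ)) := by
    simp [hfQ]
  rw [hP0, hQ0]
  have key : (-Complex.exp (Complex.I * ξ)) * (1 - w⁻¹ * Complex.exp (-(Complex.I * ξ)))
      = w⁻¹ * (1 - w * Complex.exp (Complex.I * ξ)) := by
    rw [Complex.exp_neg]
    field_simp [Complex.exp_ne_zero]
    ring
  linear_combination (Complex.exp ((-ξ) ^ 2 / (4 * π) + (-ξ) / (1 - Complex.I)) *
    (∏' ν : ℕ, fP (ν + 1)) * (∏' μ : ℕ, fQ (μ + 1))) * key
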